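/- Suppose D̄ ≠ 0 and P ∈ ℝ^{n×d} satisfies K(PPᵀ) = 0 (equivalently, all rows of P are equal). Then P is a stationary point of f (K*(F(P))P = 0), the Hessian quadratic form of f at P is negative semidefinite (Q_P(ΔP) ≤ 0 for all ΔP ∈ ℝ^{n×d}), and it is not identically zero: there exists ΔP ∈ ℝ^{n×d} with Q_P(ΔP) < 0. -/
import Mathlib


open Matrix

attribute [local instance] Matrix.frobeniusNormedAddCommGroup Matrix.frobeniusNormedSpace

noncomputable section

/-- The all-ones vector in `ℝⁿ`. -/
def eV (n : ℕ) : Fin n → ℝ := fun _ => 1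

/-- The Lindenstrauss operator `K(G) = diag(G)eᵀ + e diag(G)ᵀ − 2G`. -/
def Kop {n : ℕ} (G : Matrix (Fin n) (Fin n) ℝ) : Matrix (Fin n) (Fin n) ℝ :=
  vecMulVec G.diag (eV n) + vecMulVec (eV n) G.diag - (2 : ℝ) • G

/-- The adjoint `K*(S) = 2(Diag(Se) − S)`. -/
def Kstar {n : ℕ} (S : Matrix (Fin n) (Fin n) ℝ) : Matrix (Fin n) (Fin n) ℝ :=
  (2 : ℝ) • (Matrix.diagonal (S *ᵥ eV n) - S)

/-- `F(P) = K(PPᵀ) − D̄`, where `D̄ = K(P̄P̄ᵀ)`. -/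
def Fm {n d : ℕ} (Pbar P : Matrix (Fin n) (Fin d) ℝ) : Matrix (Fin n) (Fin n) ℝ :=
  Kop (P * Pᵀ) - Kop (Pbar * Pbarᵀ)

/-- `f(P) = (1/2)‖F(P)‖²` with the Frobenius norm. -/
def fObj {n d : ℕ} (Pbar P : Matrix (Fin n) (Fin d) ℝ) : ℝ :=
  (1 / 2) * ‖Fm Pbar P‖ ^ 2

/-- The Hessian quadratic form of `f` at `P`:
`Q_P(ΔP) = ‖K(PΔPᵀ + ΔPPᵀ)‖² + 2⟨F(P), K(ΔPΔPᵀ)⟩`. -/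
def QForm {n d : ℕ} (Pbar P ΔP : Matrix (Fin n) (Fin d) ℝ) : ℝ :=
  ‖Kop (P * ΔPᵀ + ΔP * Pᵀ)‖ ^ 2 +
    2 * Matrix.trace ((Fm Pbar P)ᵀ * Kop (ΔP * ΔPᵀ))

/-- `x` is a local minimizer of `g`: there is `δ > 0` with `g x ≤ g y` whenever `‖y − x‖ ≤ δ`. -/
def IsLocMin {E : Type*} [SeminormedAddCommGroup E] (g : E → ℝ) (x : E) : Prop :=
  ∃ δ > 0, ∀ y, ‖y - x‖ ≤ δ → g x ≤ g y

lemma kop_apply {n : ℕ} (G : Matrix (Fin n) (Fin n) ℝ) (i j : Fin n) :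
    Kop G i j = G i i + G j j - 2 * G i j := by
  simp [Kop, vecMulVec_apply, eV, Matrix.diag, Matrix.sub_apply, Matrix.add_apply]

lemma kop_qqT {n d : ℕ} (Q : Matrix (Fin n) (Fin d) ℝ) (i j : Fin n) :
    Kop (Q * Qᵀ) i j = ∑ k, (Q i k - Q j k)^2 := by
  rw [kop_apply]
  simp only [mul_apply, transpose_apply]
  rw [← Finset.sum_add_distrib, Finset.mul_sum, ← Finset.sum_sub_distrib]
  exact Finset.sum_congr rfl (fun k _ => by ring)

lemma trace_form {n : ℕ} (A B : Matrix (Fin n) (Fin n) ℝ) :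
    Matrix.trace (Aᵀ * B) = ∑ i, ∑ j, A j i * B j i := by
  simp [Matrix.trace, Matrix.mul_apply, Matrix.diag]

lemma kstar_mul {n d : ℕ} (S : Matrix (Fin n) (Fin n) ℝ) (P : Matrix (Fin n) (Fin d) ℝ)
    (h : ∀ i j k, P i k = P j k) : Kstar S * P = 0 := by
  ext i k
  simp only [Matrix.mul_apply, Kstar, Matrix.smul_apply, Matrix.sub_apply,
    Matrix.diagonal_apply, Matrix.mulVec, dotProduct, eV, mul_one,
    Matrix.zero_apply, smul_eq_mul]
  have key : ∀ j : Fin n,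
      2 * ((if i = j then ∑ l, S i l else 0) - S i j) * P j k
        = 2 * ((if i = j then ∑ l, S i l else 0) - S i j) * P i k :=
    fun j => by rw [h j i k]
  rw [Finset.sum_congr rfl (fun j _ => key j)]
  calc ∑ j, 2 * ((if i = j then ∑ l, S i l else 0) - S i j) * P i k
      = ∑ j, (2 * P i k * (if i = j then ∑ l, S i l else 0) - 2 * P i k * S i j) :=
        Finset.sum_congr rfl (fun j _ => by ring)
    _ = 2 * P i k * (∑ j, (if i = j then ∑ l, S i l else 0)) - 2 * P i k * ∑ j, S i j := by
        rw [Finset.sum_sub_distrib, Finset.mul_sum, Finset.mul_sum]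
    _ = 0 := by rw [Finset.sum_ite_eq Finset.univ i (fun _ => ∑ l, S i l)]; simp

lemma kop_sym_zero {n d : ℕ} (P Δ : Matrix (Fin n) (Fin d) ℝ)
    (h : ∀ a b k, P a k = P b k) : Kop (P * Δᵀ + Δ * Pᵀ) = 0 := by
  ext i j
  rw [kop_apply, Matrix.zero_apply]
  simp only [Matrix.add_apply, Matrix.mul_apply, Matrix.transpose_apply]
  have key : ∀ a b : Fin n, (∑ k, P a k * Δ b k) = ∑ k, P i k * Δ b k :=
    fun a b => Finset.sum_congr rfl (fun k _ => by rw [h a i k])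
  have key2 : ∀ a b : Fin n, (∑ k, Δ a k * P b k) = ∑ k, P i k * Δ a k :=
    fun a b => Finset.sum_congr rfl (fun k _ => by rw [h b i k, mul_comm])
  rw [key2 i i, key2 j j, key2 i j, key j j]
  ring

lemma rows_eq {n d : ℕ} (P : Matrix (Fin n) (Fin d) ℝ)
    (hP : Kop (P * Pᵀ) = 0) : ∀ i j k, P i k = P j k := by
  intro i j k
  have h0 : ∑ m, (P i m - P j m)^2 = 0 := by rw [← kop_qqT, hP, Matrix.zero_apply]
  have h1 := (Finset.sum_eq_zero_iff_of_nonneg (fun m _ => sq_nonneg _)).1 h0 k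
    (Finset.mem_univ k)
  have := sq_eq_zero_iff.1 h1
  linarith

/-- if `D̄ ≠ 0` and `K(PPᵀ) = 0`, then `P` is a stationary point,
the Hessian quadratic form at `P` is negative semidefinite, and it is nonzero. -/
theorem stmt_14 {n d : ℕ} (hn : 0 < n) (hd : 0 < d)
    (Pbar : Matrix (Fin n) (Fin d) ℝ) (hPbar : Pbarᵀ *ᵥ eV n = 0)
    (hD : Kop (Pbar * Pbarᵀ) ≠ 0)
    (P : Matrix (Fin n) (Fin d) ℝ) (hP : Kop (P * Pᵀ) = 0) :
    Kstar (Fm Pbar P) * P = 0 ∧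
    (∀ ΔP : Matrix (Fin n) (Fin d) ℝ, QForm Pbar P ΔP ≤ 0) ∧
    (∃ ΔP : Matrix (Fin n) (Fin d) ℝ, QForm Pbar P ΔP < 0) := by
  have hrows := rows_eq P hP
  have hFm : Fm Pbar P = -(Kop (Pbar * Pbarᵀ)) := by
    rw [Fm, hP, zero_sub]
  refine ⟨kstar_mul _ P hrows, fun ΔP => ?_, ?_⟩
  · rw [QForm, kop_sym_zero P ΔP hrows, norm_zero, hFm]
    have htr : Matrix.trace ((Kop (Pbar * Pbarᵀ))ᵀ * Kop (ΔP * ΔPᵀ)) ≥ 0 := by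
      rw [trace_form]
      refine Finset.sum_nonneg fun i _ => Finset.sum_nonneg fun j _ => ?_
      rw [kop_qqT, kop_qqT]
      exact mul_nonneg (Finset.sum_nonneg fun k _ => sq_nonneg _)
        (Finset.sum_nonneg fun k _ => sq_nonneg _)
    rw [Matrix.transpose_neg, Matrix.neg_mul, Matrix.trace_neg]
    nlinarith
  · refine ⟨Pbar, ?_⟩
    rw [QForm, kop_sym_zero P Pbar hrows, norm_zero, hFm,
      Matrix.transpose_neg, Matrix.neg_mul, Matrix.trace_neg]
    obtain ⟨a, b, hab⟩ : ∃ a b, Kop (Pbar * Pbarᵀ) a b ≠ 0 := by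
      by_contra hcon
      push_neg at hcon
      exact hD (by ext a b; rw [hcon a b, Matrix.zero_apply])
    have htr : 0 < Matrix.trace ((Kop (Pbar * Pbarᵀ))ᵀ * Kop (Pbar * Pbarᵀ)) := by
      rw [trace_form]
      refine Finset.sum_pos'
        (fun i _ => Finset.sum_nonneg fun j _ => mul_self_nonneg _)
        ⟨b, Finset.mem_univ b, Finset.sum_pos'
          (fun j _ => mul_self_nonneg _)
          ⟨a, Finset.mem_univ a, mul_self_pos.mpr hab⟩⟩
    nlinarith
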